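/- Let σ be an element preceding a Coxeter element γ in the reflection-length order on a finite real reflection group W acting on ℝ^n, let τ be a positive root with R(τ) ≤ σ, and let μ'(τ) denote the orthogonal projection of μ(τ) = -2(γ-I)⁻¹τ onto M(σ). Then μ'(τ) lies in the fixed space of R(τ)σ, and consequently σ(μ'(τ)) = R(τ)(μ'(τ)) = μ'(τ) - 2τ. -/

import Mathlib

noncomputable section
open scoped RealInnerProductSpace
open Submodule Module

open scoped RealInnerProductSpace

abbrev Euc (n : ℕ) := EuclideanSpace ℝ (Fin n)

/-- Reflection length: the minimal number of elements of `R` needed to express `g`. -/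
def reflLength {G : Type*} [Group G] (R : Set G) (g : G) : ℕ :=
  sInf {k | ∃ l : List G, (∀ x ∈ l, x ∈ R) ∧ l.length = k ∧ l.prod = g}

/-- The partial order induced by reflection length: `u ≤ w` iff `ℓ(w) = ℓ(u) + ℓ(u⁻¹w)`. -/
def reflLe {G : Type*} [Group G] (R : Set G) (u w : G) : Prop :=
  reflLength R w = reflLength R u + reflLength R (u⁻¹ * w)

/-- The simple reflection in the hyperplane orthogonal to the simple root `α i`. -/
def simpleRefl {n : ℕ} (α : Fin n → Euc n) (i : Fin n) : Euc n ≃ₗᵢ[ℝ] Euc n :=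
  reflection (ℝ ∙ (α i))ᗮ

/-- The Coxeter element `γ = R₁ R₂ ⋯ Rₙ`. -/
def coxeterElt {n : ℕ} (α : Fin n → Euc n) : Euc n ≃ₗᵢ[ℝ] Euc n :=
  (List.ofFn (simpleRefl α)).prod

/-- The reflection group `W` generated by the simple reflections. -/
def reflGroup {n : ℕ} (α : Fin n → Euc n) : Subgroup (Euc n ≃ₗᵢ[ℝ] Euc n) :=
  Subgroup.closure (Set.range (simpleRefl α))

/-- The set of all reflections of `W`. -/
def reflections {n : ℕ} (α : Fin n → Euc n) : Set (Euc n ≃ₗᵢ[ℝ] Euc n) :=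
  {r | r ∈ reflGroup α ∧ ∃ v : Euc n, v ≠ 0 ∧ r = reflection (ℝ ∙ v)ᗮ}

/-- Steinberg's roots `ρ_j` (0-indexed): `ρ_j = R₁⋯R_{j} α_{j+1}` for `j < n`, extended
cyclically by `ρ_{j+n} = γ ρ_j`. -/
def steinbergRoot {n : ℕ} [NeZero n] (α : Fin n → Euc n) (j : ℕ) : Euc n :=
  ((coxeterElt α) ^ (j / n))
    (((List.ofFn (simpleRefl α)).take (j % n)).prod
      (α ⟨j % n, Nat.mod_lt j (Nat.pos_of_ne_zero (NeZero.ne n))⟩))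

/-- The moved space `M(A) = range (A - I)`. -/
def movedSpace {n : ℕ} (A : Euc n ≃ₗᵢ[ℝ] Euc n) : Submodule ℝ (Euc n) :=
  LinearMap.range (A.toLinearEquiv.toLinearMap - LinearMap.id)

namespace BW

variable {n : ℕ}

def fixSp (A : Euc n ≃ₗᵢ[ℝ] Euc n) : Submodule ℝ (Euc n) :=
  LinearMap.ker (A.toLinearEquiv.toLinearMap - LinearMap.id)

lemma mem_fixSp {A : Euc n ≃ₗᵢ[ℝ] Euc n} {x : Euc n} : x ∈ fixSp A ↔ A x = x := by
  simp [fixSp, LinearMap.mem_ker, sub_eq_zero]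

lemma mem_movedSpace {A : Euc n ≃ₗᵢ[ℝ] Euc n} {x : Euc n} :
    x ∈ movedSpace A ↔ ∃ y, A y - y = x := by
  simp [movedSpace, LinearMap.mem_range]

lemma movedSpace_orthogonal (A : Euc n ≃ₗᵢ[ℝ] Euc n) : (movedSpace A)ᗮ = fixSp A := by
  ext x
  rw [mem_orthogonal, mem_fixSp]
  constructor
  · intro h
    have h' : ∀ y : Euc n, ⟪y, A.symm x - x⟫ = 0 := by
      intro y
      have h1 := h (A y - y) (mem_movedSpace.2 ⟨y, rfl⟩)
      have e : ⟪A y, x⟫ = ⟪y, A.symm x⟫ := by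
        conv_lhs => rw [show x = A (A.symm x) by simp]
        rw [A.inner_map_map]
      rw [inner_sub_left, e] at h1
      rw [inner_sub_right]
      linarith [h1]
    have h0 : A.symm x - x = 0 := inner_self_eq_zero.mp (h' (A.symm x - x))
    have hs : A.symm x = x := by rwa [sub_eq_zero] at h0
    calc A x = A (A.symm x) := by rw [hs]
    _ = x := A.apply_symm_apply x
  · intro hx u hu
    obtain ⟨y, hy⟩ := mem_movedSpace.1 hu
    have e : ⟪A y, x⟫ = ⟪y, x⟫ := by
      conv_lhs => rw [show x = A x by rw [hx]]
      rw [A.inner_map_map]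
    rw [← hy, inner_sub_left, e, sub_self]

lemma movedSpace_eq_orth (A : Euc n ≃ₗᵢ[ℝ] Euc n) : movedSpace A = (fixSp A)ᗮ := by
  rw [← movedSpace_orthogonal, orthogonal_orthogonal]

lemma fixSp_reflection (v : Euc n) : fixSp (reflection (ℝ ∙ v)ᗮ) = (ℝ ∙ v)ᗮ := by
  ext x; rw [mem_fixSp, reflection_eq_self_iff]

lemma movedSpace_reflection (v : Euc n) : movedSpace (reflection (ℝ ∙ v)ᗮ) = ℝ ∙ v := by
  rw [movedSpace_eq_orth, fixSp_reflection, orthogonal_orthogonal]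

lemma movedSpace_one : movedSpace (1 : Euc n ≃ₗᵢ[ℝ] Euc n) = ⊥ := by
  rw [eq_bot_iff]
  intro x hx
  obtain ⟨y, hy⟩ := mem_movedSpace.1 hx
  simp only [mem_bot]
  rw [← hy]
  exact sub_eq_zero.2 rfl

lemma movedSpace_mul_le (A B : Euc n ≃ₗᵢ[ℝ] Euc n) :
    movedSpace (A * B) ≤ movedSpace A ⊔ movedSpace B := by
  intro x hx
  obtain ⟨y, hy⟩ := mem_movedSpace.1 hx
  have : x = (A (B y) - B y) + (B y - y) := by
    rw [← hy]; show A (B y) - y = _; abel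
  rw [this]
  exact add_mem_sup (mem_movedSpace.2 ⟨B y, rfl⟩) (mem_movedSpace.2 ⟨y, rfl⟩)

lemma finrank_fixSp_add (A : Euc n ≃ₗᵢ[ℝ] Euc n) :
    finrank ℝ (fixSp A) + finrank ℝ (movedSpace A) = n := by
  rw [movedSpace_eq_orth]
  have := Submodule.finrank_add_finrank_orthogonal (K := fixSp A) (𝕜 := ℝ)
  simpa [finrank_euclideanSpace] using this


variable {n : ℕ} (α : Fin n → Euc n)

lemma simpleRefl_mem_reflections (hunit : ∀ i, ‖α i‖ = 1) (i : Fin n) :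
    simpleRefl α i ∈ reflections α := by
  refine ⟨Subgroup.subset_closure ⟨i, rfl⟩, α i, ?_, rfl⟩
  intro h0; have := hunit i; rw [h0] at this; simp at this

lemma reflections_inv {r : Euc n ≃ₗᵢ[ℝ] Euc n} (hr : r ∈ reflections α) : r⁻¹ = r := by
  obtain ⟨-, v, -, rfl⟩ := hr
  exact reflection_inv

lemma exists_refl_list (hunit : ∀ i, ‖α i‖ = 1) {g : Euc n ≃ₗᵢ[ℝ] Euc n}
    (hg : g ∈ reflGroup α) :
    ∃ l : List (Euc n ≃ₗᵢ[ℝ] Euc n), (∀ x ∈ l, x ∈ reflections α) ∧ l.prod = g := by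
  induction hg using Subgroup.closure_induction with
  | mem x hx =>
    obtain ⟨i, rfl⟩ := hx
    exact ⟨[simpleRefl α i], by simp [simpleRefl_mem_reflections α hunit], by simp⟩
  | one => exact ⟨[], by simp, by simp⟩
  | mul x y hx hy ihx ihy =>
    obtain ⟨l1, h1, rfl⟩ := ihx
    obtain ⟨l2, h2, rfl⟩ := ihy
    refine ⟨l1 ++ l2, ?_, by simp⟩
    intro z hz
    rcases List.mem_append.1 hz with h | h
    exacts [h1 z h, h2 z h]
  | inv x hx ihx =>
    obtain ⟨l, hl, rfl⟩ := ihx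
    refine ⟨l.reverse, by simpa using hl, ?_⟩
    rw [List.prod_inv_reverse]
    congr 1
    conv_lhs => rw [show l = List.map (fun x => x) l by simp]
    rw [← List.map_reverse, ← List.map_reverse]
    exact List.map_congr_left fun x hx => (reflections_inv α (hl x (by simpa using hx))).symm

lemma finrank_prod_le (l : List (Euc n ≃ₗᵢ[ℝ] Euc n)) (hl : ∀ x ∈ l, x ∈ reflections α) :
    finrank ℝ (movedSpace l.prod) ≤ l.length := by
  induction l with
  | nil => rw [List.prod_nil, movedSpace_one]; simp
  | cons r t ih =>
    obtain ⟨-, v, hv, rfl⟩ := hl r (by simp)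
    have h1 : movedSpace ((reflection (ℝ ∙ v)ᗮ :: t).prod) ≤ (ℝ ∙ v) ⊔ movedSpace t.prod := by
      rw [List.prod_cons]
      refine le_trans (movedSpace_mul_le _ _) ?_
      rw [movedSpace_reflection]
    calc finrank ℝ (movedSpace ((reflection (ℝ ∙ v)ᗮ :: t).prod))
        ≤ finrank ℝ ((ℝ ∙ v) ⊔ movedSpace t.prod : Submodule ℝ (Euc n)) :=
          Submodule.finrank_mono h1
      _ ≤ finrank ℝ (ℝ ∙ v : Submodule ℝ (Euc n)) + finrank ℝ (movedSpace t.prod) := by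
          have := Submodule.finrank_sup_add_finrank_inf_eq (ℝ ∙ v) (movedSpace t.prod)
          omega
      _ ≤ 1 + t.length := by
          have : finrank ℝ (ℝ ∙ v : Submodule ℝ (Euc n)) = 1 := finrank_span_singleton hv
          have := ih (fun x hx => hl x (by simp [hx]))
          omega
      _ = (reflection (ℝ ∙ v)ᗮ :: t).length := by simp [add_comm]

lemma finrank_le_reflLength (hunit : ∀ i, ‖α i‖ = 1) {g : Euc n ≃ₗᵢ[ℝ] Euc n}
    (hg : g ∈ reflGroup α) :
    finrank ℝ (movedSpace g) ≤ reflLength (reflections α) g := by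
  obtain ⟨l, hl, hprod⟩ := exists_refl_list α hunit hg
  have hne : {k | ∃ l : List (Euc n ≃ₗᵢ[ℝ] Euc n),
      (∀ x ∈ l, x ∈ reflections α) ∧ l.length = k ∧ l.prod = g}.Nonempty :=
    ⟨l.length, l, hl, rfl, hprod⟩
  obtain ⟨l', hl', hlen, hprod'⟩ := Nat.sInf_mem hne
  rw [reflLength, ← hlen, ← hprod']
  exact finrank_prod_le α l' hl'

lemma reflLength_coxeter_le (hunit : ∀ i, ‖α i‖ = 1) :
    reflLength (reflections α) (coxeterElt α) ≤ n := by
  apply Nat.sInf_le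
  refine ⟨List.ofFn (simpleRefl α), fun x hx => ?_, List.length_ofFn, rfl⟩
  obtain ⟨i, rfl⟩ := List.mem_ofFn.1 hx
  exact simpleRefl_mem_reflections α hunit i

lemma refl_apply_unit {v : Euc n} (hv : ‖v‖ = 1) (w : Euc n) :
    reflection (ℝ ∙ v)ᗮ w = w - (2 * ⟪v, w⟫) • v := by
  rw [reflection_orthogonal_apply, reflection_singleton_apply, hv]
  push_cast
  rw [one_pow, div_one]
  rw [two_smul, two_mul]
  module

lemma simpleRefl_apply (hunit : ∀ i, ‖α i‖ = 1) (i : Fin n) (w : Euc n) :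
    simpleRefl α i w = w - (2 * ⟪α i, w⟫) • α i :=
  refl_apply_unit (hunit i) w

lemma prod_sub_mem (S : Set (Fin n)) (l : List (Euc n ≃ₗᵢ[ℝ] Euc n))
    (hl : ∀ x ∈ l, ∃ i ∈ S, x = simpleRefl α i) (hunit : ∀ i, ‖α i‖ = 1) (v : Euc n) :
    l.prod v - v ∈ span ℝ (α '' S) := by
  induction l with
  | nil => simp
  | cons r t ih =>
    obtain ⟨i, hiS, rfl⟩ := hl r (by simp)
    have h1 : (simpleRefl α i :: t).prod v - v
        = (simpleRefl α i (t.prod v) - t.prod v) + (t.prod v - v) := by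
      rw [List.prod_cons]
      show simpleRefl α i (t.prod v) - v = _
      abel
    rw [h1]
    apply Submodule.add_mem
    · rw [simpleRefl_apply α hunit]
      have : t.prod v - (2 * ⟪α i, t.prod v⟫) • α i - t.prod v
          = (-(2 * ⟪α i, t.prod v⟫)) • α i := by module
      rw [this]
      exact Submodule.smul_mem _ _ (Submodule.subset_span ⟨i, hiS, rfl⟩)
    · exact ih (fun x hx => hl x (by simp [hx]))
  
lemma coxeter_aux (hunit : ∀ i, ‖α i‖ = 1) (hli : LinearIndependent ℝ α) :
    ∀ k m, n - m ≤ k → ∀ v : Euc n,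
      ((List.ofFn (simpleRefl α)).drop m).prod v = v → ∀ i : Fin n, m ≤ ↑i → ⟪α i, v⟫ = 0 := by
  intro k
  induction k with
  | zero =>
    intro m hm v hv i hi
    exact absurd (lt_of_le_of_lt hi i.isLt) (by omega)
  | succ k ih =>
    intro m hm v hv i hi
    by_cases hmn : n ≤ m
    · exact absurd (lt_of_le_of_lt hi i.isLt) (by omega)
    push_neg at hmn
    have hmlt : m < (List.ofFn (simpleRefl α)).length := by
      rw [List.length_ofFn]; exact hmn
    set m' : Fin n := ⟨m, hmn⟩ with hm'
    rw [List.drop_eq_getElem_cons hmlt, List.getElem_ofFn] at hv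
    rw [List.prod_cons] at hv
    have hv' : ((List.ofFn (simpleRefl α)).drop (m + 1)).prod v = simpleRefl α m' v := by
      have : simpleRefl α m' (((List.ofFn (simpleRefl α)).drop (m + 1)).prod v) = v := hv
      calc ((List.ofFn (simpleRefl α)).drop (m + 1)).prod v
          = simpleRefl α m' (simpleRefl α m' (((List.ofFn (simpleRefl α)).drop (m + 1)).prod v)) := by
            rw [simpleRefl, reflection_reflection]
        _ = simpleRefl α m' v := by rw [this]
    have hmem : ((List.ofFn (simpleRefl α)).drop (m + 1)).prod v - v
        ∈ span ℝ (α '' {j : Fin n | m + 1 ≤ ↑j}) := by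
      apply prod_sub_mem α _ _ _ hunit
      intro x hx
      obtain ⟨j, hj, hx'⟩ := List.mem_iff_getElem.1 hx
      rw [List.getElem_drop] at hx'
      rw [List.getElem_ofFn] at hx'
      have hjlt : m + 1 + j < n := by
        have := hj
        rw [List.length_drop, List.length_ofFn] at this
        omega
      exact ⟨⟨m + 1 + j, hjlt⟩, by show m + 1 ≤ m + 1 + j; omega, hx'.symm⟩
    rw [hv', simpleRefl_apply α hunit] at hmem
    have hcoef : ⟪α m', v⟫ = 0 := by
      by_contra hc
      have hm'mem : α m' ∈ span ℝ (α '' {j : Fin n | m + 1 ≤ ↑j}) := by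
        have h2 : (-(2 * ⟪α m', v⟫))⁻¹ • ((-(2 * ⟪α m', v⟫)) • α m')
            ∈ span ℝ (α '' {j : Fin n | m + 1 ≤ ↑j}) := by
          apply Submodule.smul_mem
          have : v - (2 * ⟪α m', v⟫) • α m' - v = (-(2 * ⟪α m', v⟫)) • α m' := by module
          rwa [this] at hmem
        rwa [inv_smul_smul₀ (by simp [hc])] at h2
      exact hli.notMem_span_image (by simp [hm']) hm'mem
    have hfix : ((List.ofFn (simpleRefl α)).drop (m + 1)).prod v = v := by
      rw [hv', simpleRefl_apply α hunit, hcoef]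
      simp
    rcases eq_or_lt_of_le hi with heq | hlt
    · have : i = m' := Fin.ext heq.symm
      rw [this]; exact hcoef
    · exact ih (m+1) (by omega) v hfix i hlt

lemma fixSp_coxeter (hunit : ∀ i, ‖α i‖ = 1) (hli : LinearIndependent ℝ α)
    (hspan : span ℝ (Set.range α) = ⊤) :
    fixSp (coxeterElt α) = ⊥ := by
  rw [eq_bot_iff]
  intro v hv
  rw [mem_fixSp] at hv
  have hall : ∀ i : Fin n, ⟪α i, v⟫ = 0 := by
    intro i
    exact coxeter_aux α hunit hli n 0 (by omega) v (by simpa [coxeterElt] using hv) i (by omega)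
  have : v ∈ (span ℝ (Set.range α))ᗮ := by
    rw [mem_orthogonal]
    intro u hu
    induction hu using Submodule.span_induction with
    | mem x hx => obtain ⟨i, rfl⟩ := hx; exact hall i
    | zero => simp
    | add x y hx hy ihx ihy => rw [inner_add_left, ihx, ihy, add_zero]
    | smul c x hx ihx => rw [inner_smul_left, ihx, mul_zero]
  rw [hspan, Submodule.top_orthogonal_eq_bot] at this
  simpa using this


lemma bw_fix_inter {a b : Euc n ≃ₗᵢ[ℝ] Euc n}
    (h : finrank ℝ (movedSpace a) + finrank ℝ (movedSpace b) ≤ finrank ℝ (movedSpace (a * b))) :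
    fixSp (a * b) = fixSp a ⊓ fixSp b := by
  symm
  have hle : fixSp a ⊓ fixSp b ≤ fixSp (a * b) := by
    intro x hx
    rw [mem_fixSp]
    show a (b x) = x
    rw [mem_fixSp.1 ((Submodule.mem_inf.1 hx).2), mem_fixSp.1 ((Submodule.mem_inf.1 hx).1)]
  apply Submodule.eq_of_le_of_finrank_le hle
  have e1 := finrank_fixSp_add (a * b)
  have e2 := finrank_fixSp_add a
  have e3 := finrank_fixSp_add b
  have e4 := Submodule.finrank_sup_add_finrank_inf_eq (fixSp a) (fixSp b)
  have e5 : finrank ℝ (fixSp a ⊔ fixSp b : Submodule ℝ (Euc n)) ≤ n := by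
    have := Submodule.finrank_le (fixSp a ⊔ fixSp b)
    simpa [finrank_euclideanSpace] using this
  omega

lemma finrank_moved_mul_le (a b : Euc n ≃ₗᵢ[ℝ] Euc n) :
    finrank ℝ (movedSpace (a * b)) ≤ finrank ℝ (movedSpace a) + finrank ℝ (movedSpace b) := by
  calc finrank ℝ (movedSpace (a * b))
      ≤ finrank ℝ (movedSpace a ⊔ movedSpace b : Submodule ℝ (Euc n)) :=
        Submodule.finrank_mono (movedSpace_mul_le a b)
    _ ≤ _ := by
        have := Submodule.finrank_sup_add_finrank_inf_eq (movedSpace a) (movedSpace b)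
        omega

lemma fixSp_antitone {a b : Euc n ≃ₗᵢ[ℝ] Euc n} (h : fixSp a ≤ fixSp b) :
    movedSpace b ≤ movedSpace a := by
  rw [movedSpace_eq_orth, movedSpace_eq_orth]
  exact Submodule.orthogonal_le h

/-- conjugation of a reflection by an isometry -/
lemma reflection_conj (f : Euc n ≃ₗᵢ[ℝ] Euc n) (v : Euc n) :
    reflection (ℝ ∙ (f v))ᗮ = f * reflection (ℝ ∙ v)ᗮ * f⁻¹ := by
  have hmap : ((ℝ ∙ v)ᗮ).map (f.toLinearEquiv : Euc n →ₗ[ℝ] Euc n) = (ℝ ∙ (f v))ᗮ := by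
    ext x
    simp only [Submodule.mem_map]
    constructor
    · rintro ⟨y, hy, rfl⟩
      rw [Submodule.mem_orthogonal]
      intro u hu
      obtain ⟨c, rfl⟩ := Submodule.mem_span_singleton.1 hu
      have : ⟪f v, f y⟫ = 0 := by
        rw [f.inner_map_map]
        exact ((Submodule.mem_orthogonal _ _).1 hy) v (Submodule.mem_span_singleton_self v)
      rw [inner_smul_left]
      show (c : ℝ) * ⟪f v, f y⟫ = 0
      rw [this, mul_zero]
    · intro hx
      refine ⟨f.symm x, ?_, by simp⟩
      rw [Submodule.mem_orthogonal]
      intro u hu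
      obtain ⟨c, rfl⟩ := Submodule.mem_span_singleton.1 hu
      have : ⟪f v, x⟫ = 0 :=
        ((Submodule.mem_orthogonal _ _).1 hx) (f v) (Submodule.mem_span_singleton_self _)
      have e : ⟪v, f.symm x⟫ = ⟪f v, x⟫ := by
        rw [← f.inner_map_map v (f.symm x), f.apply_symm_apply]
      rw [inner_smul_left]
      show (c : ℝ) * ⟪v, f.symm x⟫ = 0
      rw [e, this, mul_zero]
  have hcongr : ∀ (K K' : Submodule ℝ (Euc n)) (h : K = K'),
      reflection K = reflection K' := by
    intro K K' h; subst h; rfl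
  rw [hcongr _ _ hmap.symm, reflection_map]
  ext x
  rfl

lemma coxeterElt_mem : coxeterElt α ∈ reflGroup α := by
  apply Subgroup.list_prod_mem
  intro x hx
  obtain ⟨i, rfl⟩ := List.mem_ofFn.1 hx
  exact Subgroup.subset_closure ⟨i, rfl⟩

lemma steinberg_orbit [NeZero n] (j : ℕ) :
    ∃ (w : Euc n ≃ₗᵢ[ℝ] Euc n) (i : Fin n), w ∈ reflGroup α ∧ steinbergRoot α j = w (α i) := by
  refine ⟨(coxeterElt α) ^ (j / n) * ((List.ofFn (simpleRefl α)).take (j % n)).prod,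
    ⟨j % n, Nat.mod_lt j (Nat.pos_of_ne_zero (NeZero.ne n))⟩, ?_, rfl⟩
  apply Subgroup.mul_mem
  · exact Subgroup.pow_mem _ (coxeterElt_mem α) _
  · apply Subgroup.list_prod_mem
    intro x hx
    have hx' : x ∈ List.ofFn (simpleRefl α) := List.mem_of_mem_take hx
    obtain ⟨i, rfl⟩ := List.mem_ofFn.1 hx'
    exact Subgroup.subset_closure ⟨i, rfl⟩

end BW

set_option maxHeartbeats 1000000

/-- Let `σ ≤ γ` in the reflection-length order, `τ` a positive root with `R(τ) ≤ σ`,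
and `μ'(τ)` the orthogonal projection of `μ(τ)` (where `γ μ(τ) = μ(τ) - 2τ`) onto
`M(σ)`. Then `μ'(τ)` lies in the fixed space of `R(τ)σ`, and consequently
`σ(μ'(τ)) = R(τ)(μ'(τ)) = μ'(τ) - 2τ`. -/
theorem projection_mem_fixedSpace (n : ℕ) [NeZero n] (α : Fin n → Euc n)
    (hunit : ∀ i, ‖α i‖ = 1)
    (hli : LinearIndependent ℝ α)
    (hspan : Submodule.span ℝ (Set.range α) = ⊤)
    (hfin : ((reflGroup α : Set (Euc n ≃ₗᵢ[ℝ] Euc n))).Finite)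
    (σ : Euc n ≃ₗᵢ[ℝ] Euc n) (hσW : σ ∈ reflGroup α)
    (hσγ : reflLe (reflections α) σ (coxeterElt α))
    (τ : Euc n) (hτpos : ∃ j, j < n * orderOf (coxeterElt α) / 2 ∧ τ = steinbergRoot α j)
    (hτσ : reflLe (reflections α) (Submodule.reflection (ℝ ∙ τ)ᗮ) σ)
    (μ : Euc n) (hμ : coxeterElt α μ = μ - (2 : ℝ) • τ) :
    Submodule.reflection (ℝ ∙ τ)ᗮ (σ ((Submodule.orthogonalProjectionOnto (movedSpace σ) μ : Euc n))) =
        (Submodule.orthogonalProjectionOnto (movedSpace σ) μ : Euc n) ∧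
    σ ((Submodule.orthogonalProjectionOnto (movedSpace σ) μ : Euc n)) =
        Submodule.reflection (ℝ ∙ τ)ᗮ ((Submodule.orthogonalProjectionOnto (movedSpace σ) μ : Euc n)) ∧
    σ ((Submodule.orthogonalProjectionOnto (movedSpace σ) μ : Euc n)) =
        (Submodule.orthogonalProjectionOnto (movedSpace σ) μ : Euc n) - (2 : ℝ) • τ := by
  classical
  obtain ⟨γ, hγdef⟩ : ∃ x, x = coxeterElt α := ⟨_, rfl⟩
  obtain ⟨r, hrdef⟩ : ∃ x, x = reflection (ℝ ∙ τ)ᗮ := ⟨_, rfl⟩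
  rw [← hγdef] at hσγ hμ
  rw [← hrdef] at hτσ ⊢
  -- τ is a unit vector in the W-orbit of the simple roots
  obtain ⟨j, -, hτj⟩ := hτpos
  obtain ⟨w, i, hwW, hwτ⟩ := BW.steinberg_orbit α j
  have hτw : τ = w (α i) := by rw [hτj, hwτ]
  have hτunit : ‖τ‖ = 1 := by rw [hτw, w.norm_map]; exact hunit i
  have hτ0 : τ ≠ 0 := by intro h; rw [h] at hτunit; simp at hτunit
  -- r ∈ W
  have hrW : r ∈ reflGroup α := by
    rw [hrdef, hτw, BW.reflection_conj]
    exact Subgroup.mul_mem _ (Subgroup.mul_mem _ hwW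
      (Subgroup.subset_closure ⟨i, rfl⟩)) (Subgroup.inv_mem _ hwW)
  have hγW : γ ∈ reflGroup α := hγdef ▸ BW.coxeterElt_mem α
  obtain ⟨σ', hσ'def⟩ : ∃ x, x = σ⁻¹ * γ := ⟨_, rfl⟩
  obtain ⟨σ'', hσ''def⟩ : ∃ x, x = r * σ := ⟨_, rfl⟩
  have hσ'W : σ' ∈ reflGroup α := by
    rw [hσ'def]; exact Subgroup.mul_mem _ (Subgroup.inv_mem _ hσW) hγW
  have hσ''W : σ'' ∈ reflGroup α := by
    rw [hσ''def]; exact Subgroup.mul_mem _ hrW hσW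
  have hrr : r * r = 1 := by rw [hrdef]; exact reflection_mul_reflection _
  have hrinv : r⁻¹ = r := by rw [hrdef]; exact reflection_inv
  have hγfact : σ * σ' = γ := by rw [hσ'def, ← mul_assoc, mul_inv_cancel, one_mul]
  have hσfact : r * σ'' = σ := by rw [hσ''def, ← mul_assoc, hrr, one_mul]
  have hrγfact : σ'' * σ' = r * γ := by
    rw [hσ''def, hσ'def, mul_assoc, ← mul_assoc σ σ⁻¹, mul_inv_cancel, one_mul]
  -- dimensions
  have hdγ : finrank ℝ (movedSpace γ) = n := by
    rw [hγdef, BW.movedSpace_eq_orth, BW.fixSp_coxeter α hunit hli hspan]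
    rw [Submodule.bot_orthogonal_eq_top]
    simp [finrank_euclideanSpace]
  have hdr : finrank ℝ (movedSpace r) = 1 := by
    rw [hrdef, BW.movedSpace_reflection]
    exact finrank_span_singleton hτ0
  have hdσ := BW.finrank_le_reflLength α hunit hσW
  have hdσ' := BW.finrank_le_reflLength α hunit hσ'W
  have hdσ'' := BW.finrank_le_reflLength α hunit hσ''W
  have hdrl := BW.finrank_le_reflLength α hunit hrW
  have hℓγ : reflLength (reflections α) γ ≤ n := by
    rw [hγdef]; exact BW.reflLength_coxeter_le α hunit
  have hsub1 : finrank ℝ (movedSpace γ)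
      ≤ finrank ℝ (movedSpace σ) + finrank ℝ (movedSpace σ') := by
    rw [← hγfact]; exact BW.finrank_moved_mul_le σ σ'
  have hsub2 : finrank ℝ (movedSpace σ)
      ≤ finrank ℝ (movedSpace r) + finrank ℝ (movedSpace σ'') := by
    rw [← hσfact]; exact BW.finrank_moved_mul_le r σ''
  have hsub3 : finrank ℝ (movedSpace γ)
      ≤ finrank ℝ (movedSpace r) + finrank ℝ (movedSpace (r * γ)) := by
    have : r * (r * γ) = γ := by rw [← mul_assoc, hrr, one_mul]
    conv_lhs => rw [← this]
    exact BW.finrank_moved_mul_le r (r * γ)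
  have hsub4 : finrank ℝ (movedSpace (r * γ))
      ≤ finrank ℝ (movedSpace σ'') + finrank ℝ (movedSpace σ') := by
    rw [← hrγfact]; exact BW.finrank_moved_mul_le σ'' σ'
  have hlen1 : reflLength (reflections α) γ
      = reflLength (reflections α) σ + reflLength (reflections α) σ' := by
    rw [hσ'def]; exact hσγ
  have hlen2 : reflLength (reflections α) σ
      = reflLength (reflections α) r + reflLength (reflections α) σ'' := by
    have h := hτσ
    rw [reflLe] at h
    rwa [hrinv, ← hσ''def] at h
  -- equalities via omega
  have heq1 : finrank ℝ (movedSpace r) + finrank ℝ (movedSpace σ'')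
      = finrank ℝ (movedSpace σ) := by omega
  have heq2 : finrank ℝ (movedSpace σ) + finrank ℝ (movedSpace σ')
      = finrank ℝ (movedSpace γ) := by omega
  have heq3 : finrank ℝ (movedSpace σ'') + finrank ℝ (movedSpace σ')
      = finrank ℝ (movedSpace (r * γ)) := by omega
  -- Brady-Watt fixed space decompositions
  have hF1 : BW.fixSp σ = BW.fixSp r ⊓ BW.fixSp σ'' := by
    have := BW.bw_fix_inter (a := r) (b := σ'') (by rw [hσfact]; omega)
    rwa [hσfact] at this
  have hF2 : BW.fixSp (r * γ) = BW.fixSp σ'' ⊓ BW.fixSp σ' := by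
    have := BW.bw_fix_inter (a := σ'') (b := σ') (by rw [hrγfact]; omega)
    rwa [hrγfact] at this
  -- inner product fact
  have hinner : ⟪τ, μ⟫ = 1 := by
    have hnorm : ‖μ - (2:ℝ) • τ‖ = ‖μ‖ := by rw [← hμ]; exact γ.norm_map μ
    have h2 : ‖μ - (2:ℝ) • τ‖ ^ 2 = ‖μ‖ ^ 2 := by rw [hnorm]
    rw [norm_sub_sq_real, inner_smul_right, norm_smul] at h2
    simp only [Real.norm_ofNat] at h2
    rw [mul_pow, hτunit] at h2
    have : ⟪μ, τ⟫ = 1 := by nlinarith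
    rw [real_inner_comm]; exact this
  -- μ is fixed by r * γ
  have hμfix : (r * γ) μ = μ := by
    show r (γ μ) = μ
    rw [hμ, hrdef, BW.refl_apply_unit hτunit]
    rw [inner_sub_right, inner_smul_right, hinner, real_inner_self_eq_norm_sq, hτunit]
    norm_num
  have hμF : μ ∈ BW.fixSp σ'' ⊓ BW.fixSp σ' := by
    rw [← hF2, BW.mem_fixSp]; exact hμfix
  have hμσ'' : σ'' μ = μ := BW.mem_fixSp.1 (Submodule.mem_inf.1 hμF).1
  -- the projection
  set μ' : Euc n := (Submodule.orthogonalProjectionOnto (movedSpace σ) μ : Euc n) with hμ'def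
  have hν : μ - μ' ∈ BW.fixSp σ := by
    rw [← BW.movedSpace_orthogonal]
    exact Submodule.sub_starProjection_mem_orthogonal (K := movedSpace σ) μ
  have hνσ'' : σ'' (μ - μ') = μ - μ' := by
    have : μ - μ' ∈ BW.fixSp σ'' := by
      rw [hF1] at hν
      exact (Submodule.mem_inf.1 hν).2
    exact BW.mem_fixSp.1 this
  have hgoal1 : r (σ μ') = μ' := by
    have : σ'' μ' = μ' := by
      have h1 : σ'' μ' = σ'' μ - σ'' (μ - μ') := by
        rw [← map_sub]; congr 1; abel
      rw [h1, hμσ'', hνσ'']; abel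
    rw [hσ''def] at this
    exact this
  have hgoal2 : σ μ' = r μ' := by
    have := congrArg r hgoal1
    rw [hrdef, reflection_reflection] at this
    rw [this, hrdef]
  have hτM : τ ∈ movedSpace σ := by
    have hle : BW.fixSp σ ≤ BW.fixSp r := by rw [hF1]; exact inf_le_left
    have := BW.fixSp_antitone hle
    apply this
    rw [hrdef, BW.movedSpace_reflection]
    exact Submodule.mem_span_singleton_self τ
  have hinner' : ⟪τ, μ'⟫ = 1 := by
    have h0 : ⟪τ, μ - μ'⟫ = 0 := by
      rw [← BW.movedSpace_orthogonal] at hν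
      exact (Submodule.mem_orthogonal _ _).1 hν τ hτM
    rw [inner_sub_right] at h0
    rw [← hinner]; linarith
  have hgoal3 : σ μ' = μ' - (2:ℝ) • τ := by
    rw [hgoal2, hrdef, BW.refl_apply_unit hτunit, hinner']
    norm_num
  exact ⟨hgoal1, hgoal2, hgoal3⟩
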